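/- Let K be a field and let q ∈ K with q ≠ 0, (1 + q)² ≠ 0 and q² + q + 1 ≠ 0. Set d₂ = q + 1 + q⁻¹. Suppose f₁, f₂, g₁, g₂ ∈ K satisfy f₁·g₁·d₂ + f₂·g₂ = 1, f₂·g₂ = f₁·g₁, f₁²·d₂ − f₁·g₁ = f₂, and g₁²·d₂ − f₁·g₁ = g₂. Then f₁·g₁ = f₂·g₂ = 1/(q + 2 + q⁻¹) and f₁² + g₁² = (q + q⁻¹)/(q + 2 + q⁻¹). -/
import Mathlib


/-- Over any field, the equations forced on the crossing coefficients
determine the product `f₁·g₁ = f₂·g₂` and the sum of squares `f₁² + g₁²`. -/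
theorem g2_crossing_coefficients_sum_and_product
    (K : Type*) [Field K] (q d₂ f₁ f₂ g₁ g₂ : K)
    (hq0 : q ≠ 0) (hq1 : (1 + q) ^ 2 ≠ 0) (hq2 : q ^ 2 + q + 1 ≠ 0)
    (hd₂ : d₂ = q + 1 + q⁻¹)
    (h1 : f₁ * g₁ * d₂ + f₂ * g₂ = 1)
    (h2 : f₂ * g₂ = f₁ * g₁)
    (h3 : f₁ ^ 2 * d₂ - f₁ * g₁ = f₂)
    (h4 : g₁ ^ 2 * d₂ - f₁ * g₁ = g₂) :
    f₁ * g₁ = 1 / (q + 2 + q⁻¹) ∧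
    f₂ * g₂ = 1 / (q + 2 + q⁻¹) ∧
    f₁ ^ 2 + g₁ ^ 2 = (q + q⁻¹) / (q + 2 + q⁻¹) := by
  subst h3 h4 hd₂
  have hqinv : q * q⁻¹ = 1 := mul_inv_cancel₀ hq0
  have hs : q + 2 + q⁻¹ ≠ 0 := by
    intro h
    apply hq1
    have : (1 + q) ^ 2 = q * (q + 2 + q⁻¹) := by linear_combination -hqinv
    rw [this, h, mul_zero]
  have hd2 : (q + 1 + q⁻¹) ≠ 0 := by
    intro h
    apply hq2
    have : q ^ 2 + q + 1 = q * (q + 1 + q⁻¹) := by linear_combination -hqinv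
    rw [this, h, mul_zero]
  -- product
  have hp' : f₁ * g₁ * (q + 2 + q⁻¹) = 1 := by linear_combination h1 - h2
  have hp : f₁ * g₁ = 1 / (q + 2 + q⁻¹) := by
    rw [eq_div_iff hs]; exact hp'
  refine ⟨hp, by rw [h2]; exact hp, ?_⟩
  -- sum of squares
  rw [eq_div_iff hs]
  have key : (q + 1 + q⁻¹) * (f₁ * g₁) * (f₁ ^ 2 + g₁ ^ 2)
      = (f₁ * g₁) ^ 2 * (q + 1 + q⁻¹) ^ 2 + (f₁ * g₁) ^ 2 - (f₁ * g₁) := by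
    linear_combination -h2
  have hfg : f₁ * g₁ ≠ 0 := by
    rw [hp]; exact one_div_ne_zero hs
  have goal' : (q + 1 + q⁻¹) * (f₁ * g₁) * ((f₁ ^ 2 + g₁ ^ 2) * (q + 2 + q⁻¹))
      = (q + 1 + q⁻¹) * (f₁ * g₁) * (q + q⁻¹) := by
    linear_combination (q + 2 + q⁻¹) * key
      + ((f₁ * g₁) * (q + 1 + q⁻¹) ^ 2 + f₁ * g₁) * hp'
  exact mul_left_cancel₀ (mul_ne_zero hd2 hfg) goal'
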